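/- There exists no sequence transformation that accelerates the convergence of all logarithmically convergent real sequences. Precisely: there is no family of functions g_n : ℝ^{n+1} → ℝ (n ≥ 0), defining a transformation T by (Ts)_n = g_n(s_0, s_1, …, s_n), with the property that for every logarithmically convergent real sequence (s_n) with limit L, the transformed sequence ((Ts)_n) converges to L and ((Ts)_n − L)/(s_n − L) → 0 as n → ∞. -/

import Mathlib

open Filter

private lemma aux_div2 : Tendsto (fun n : ℕ => 1 / ((n : ℝ) + 2)) atTop (nhds 0) := by
  have h := (tendsto_one_div_add_atTop_nhds_zero_nat :
    Tendsto (fun n : ℕ => 1 / ((n : ℝ) + 1)) atTop (nhds 0)).comp (tendsto_add_atTop_nat 1)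
  refine h.congr fun n => ?_
  simp only [Function.comp]
  push_cast
  ring_nf

/-- State of the diagonal construction: a sequence `p` built so far up to index `m`,
with current value `c = p m`, all earlier values strictly larger. -/
structure AccSt where
  p : ℕ → ℝ
  m : ℕ
  c : ℝ
  hc : 0 < c
  hpm : p m = c
  hdec : ∀ n < m, c < p n

/-- One block of the construction. -/
abbrev AccStep (g : (n : ℕ) → (Fin (n + 1) → ℝ) → ℝ) (q q' : AccSt) : Prop :=
  q.m < q'.m ∧ (∀ n ≤ q.m, q'.p n = q.p n) ∧ q'.c ≤ 3 / 4 * q.c ∧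
    (∀ n, q.m ≤ n → n < q'.m →
      q'.p (n + 1) ≤ q'.p n ∧ q'.p n - q'.p (n + 1) ≤ q'.p n / (n + 2)) ∧
    1 / 2 * q'.c ≤ g q'.m fun i => q'.p i.1

private lemma acc_step_exists (g : (n : ℕ) → (Fin (n + 1) → ℝ) → ℝ)
    (hg : ∀ (s : ℕ → ℝ) (L : ℝ),
        (Tendsto s atTop (nhds L) ∧ (∀ n : ℕ, s n ≠ L) ∧
            Tendsto (fun n : ℕ => (s (n + 1) - L) / (s n - L)) atTop (nhds 1)) →
          Tendsto (fun n : ℕ => g n (fun i => s i.1)) atTop (nhds L) ∧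
            Tendsto (fun n : ℕ => (g n (fun i => s i.1) - L) / (s n - L)) atTop
              (nhds 0))
    (q : AccSt) : ∃ q', AccStep g q q' := by
  obtain ⟨p, m, c, hc, hpm, hdec⟩ := q
  obtain ⟨L, hL0, hL⟩ : ∃ L : ℝ, 0 < L ∧ c = 2 * L := ⟨c / 2, by positivity, by ring⟩
  set t : ℕ → ℝ := fun n => if n < m then p n else L + L * (m + 1) / (n + 1) with ht
  have htf : ∀ n, m ≤ n → t n = L + L * (m + 1) / (n + 1) := by
    intro n hn; simp only [ht, if_neg (by omega : ¬ n < m)]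
  have hm1 : ((m : ℝ) + 1) ≠ 0 := by positivity
  have htm : t m = c := by
    rw [htf m le_rfl, mul_div_assoc, div_self hm1, mul_one]
    linarith
  have htpos : ∀ n, m ≤ n → L < t n := by
    intro n hn
    rw [htf n hn]
    have : 0 < L * ((m : ℝ) + 1) / ((n : ℝ) + 1) := by positivity
    linarith
  have ht_gt : ∀ n, L < t n := by
    intro n
    by_cases h : n < m
    · simp only [ht, if_pos h]
      have := hdec n h
      linarith
    · exact htpos n (by omega)
  have htmono : ∀ a b : ℕ, m ≤ a → a < b → t b < t a := by
    intro a b ha hab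
    rw [htf a ha, htf b (by omega)]
    have hlt : L * ((m : ℝ) + 1) / ((b : ℝ) + 1) < L * ((m : ℝ) + 1) / ((a : ℝ) + 1) := by
      apply div_lt_div_of_pos_left (by positivity) (by positivity)
      have : (a : ℝ) < (b : ℝ) := by exact_mod_cast hab
      linarith
    linarith
  -- t is logarithmically convergent with limit L
  have ht1 : Tendsto t atTop (nhds L) := by
    have h2 : Tendsto (fun n : ℕ => L + L * ((m : ℝ) + 1) * (1 / ((n : ℝ) + 1))) atTop
        (nhds (L + L * ((m : ℝ) + 1) * 0)) :=
      tendsto_const_nhds.add (tendsto_const_nhds.mul tendsto_one_div_add_atTop_nhds_zero_nat)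
    rw [mul_zero, add_zero] at h2
    refine h2.congr' ?_
    filter_upwards [eventually_ge_atTop m] with n hn
    rw [htf n hn]; ring
  have ht2 : ∀ n, t n ≠ L := fun n => (ht_gt n).ne'
  have ht3 : Tendsto (fun n : ℕ => (t (n + 1) - L) / (t n - L)) atTop (nhds 1) := by
    have hr : Tendsto (fun n : ℕ => 1 - 1 / ((n : ℝ) + 2)) atTop (nhds 1) := by
      simpa using tendsto_const_nhds.sub aux_div2
    refine hr.congr' ?_
    filter_upwards [eventually_ge_atTop m] with n hn
    rw [htf n hn, htf (n + 1) (by omega)]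
    push_cast
    rw [add_sub_cancel_left, add_sub_cancel_left]
    have h1 : ((n : ℝ) + 1) ≠ 0 := by positivity
    have h2 : ((n : ℝ) + 2) ≠ 0 := by positivity
    have h3 : L ≠ 0 := hL0.ne'
    field_simp
    ring
  have H := hg t L ⟨ht1, ht2, ht3⟩
  obtain ⟨N1, hN1⟩ := Metric.tendsto_atTop.mp H.1 (L / 10) (by positivity)
  obtain ⟨N2, hN2⟩ := Metric.tendsto_atTop.mp ht1 (L / 10) (by positivity)
  set N := max (max N1 N2) (m + 1) with hN
  have hNm : m < N := lt_of_lt_of_le (Nat.lt_succ_self m) (le_max_right _ _)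
  have hgN : |g N (fun i => t i.1) - L| < L / 10 := by
    have := hN1 N (le_trans (le_max_left _ _) (le_max_left _ _))
    rwa [Real.dist_eq] at this
  have htN : |t N - L| < L / 10 := by
    have := hN2 N (le_trans (le_max_right _ _) (le_max_left _ _))
    rwa [Real.dist_eq] at this
  have htNlt : t N < L + L / 10 := by have := abs_lt.mp htN; linarith
  have htNgt : L < t N := htpos N hNm.le
  have hdec' : ∀ n < N, t N < t n := by
    intro n hn
    by_cases h : m ≤ n
    · exact htmono n N h hn
    · simp only [ht, if_pos (by omega : n < m)]
      have := hdec n (by omega)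
      linarith
  refine ⟨⟨t, N, t N, by linarith, rfl, hdec'⟩, hNm, ?_, ?_, ?_, ?_⟩
  · intro n hn
    have hn' : n ≤ m := hn
    show t n = p n
    rcases Nat.lt_or_ge n m with h | h
    · simp only [ht, if_pos h]
    · have he : n = m := by omega
      rw [he, htm, hpm]
  · show t N ≤ 3 / 4 * c
    linarith
  · intro n hn1 hn2
    have hn1' : m ≤ n := hn1
    have hn2' : n < N := hn2
    constructor
    · show t (n + 1) ≤ t n
      exact le_of_lt (htmono n (n + 1) hn1' (Nat.lt_succ_self n))
    · show t n - t (n + 1) ≤ t n / ((n : ℝ) + 2)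
      rw [htf n hn1', htf (n + 1) (by omega)]
      push_cast
      have hc2 : ((n : ℝ) + 1 + 1) = (n : ℝ) + 2 := by ring
      rw [hc2]
      have h1 : ((n : ℝ) + 1) ≠ 0 := by positivity
      have h2 : ((n : ℝ) + 2) ≠ 0 := by positivity
      have e1 : L + L * ((m : ℝ) + 1) / ((n : ℝ) + 1) - (L + L * ((m : ℝ) + 1) / ((n : ℝ) + 2))
          = L * ((m : ℝ) + 1) / (((n : ℝ) + 1) * ((n : ℝ) + 2)) := by
        field_simp
        ring
      have e2 : (L + L * ((m : ℝ) + 1) / ((n : ℝ) + 1)) / ((n : ℝ) + 2)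
          = L / ((n : ℝ) + 2) + L * ((m : ℝ) + 1) / (((n : ℝ) + 1) * ((n : ℝ) + 2)) := by
        field_simp
      have h3 : 0 ≤ L / ((n : ℝ) + 2) := by positivity
      rw [e1, e2]
      linarith
  · show 1 / 2 * t N ≤ g N fun i => t i.1
    have := abs_lt.mp hgN
    linarith

/-- Delahaye–Germain-Bonne: there is no sequence transformation
`(Ts)ₙ = gₙ(s₀, …, sₙ)` that accelerates the convergence of every logarithmically
convergent real sequence, i.e. such that for every sequence `s` with limit `L`
satisfying `sₙ ≠ L` for all `n` and `(s_{n+1} - L)/(sₙ - L) → 1`, the transformed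
sequence converges to `L` and `((Ts)ₙ - L)/(sₙ - L) → 0`. -/
theorem no_universal_accelerator_for_logarithmic_convergence :
    ¬ ∃ g : (n : ℕ) → (Fin (n + 1) → ℝ) → ℝ,
      ∀ (s : ℕ → ℝ) (L : ℝ),
        (Tendsto s atTop (nhds L) ∧ (∀ n : ℕ, s n ≠ L) ∧
            Tendsto (fun n : ℕ => (s (n + 1) - L) / (s n - L)) atTop (nhds 1)) →
          Tendsto (fun n : ℕ => g n (fun i => s i.1)) atTop (nhds L) ∧
            Tendsto (fun n : ℕ => (g n (fun i => s i.1) - L) / (s n - L)) atTop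
              (nhds 0) := by
  rintro ⟨g, hg⟩
  choose F hF using acc_step_exists g hg
  set q0 : AccSt := ⟨fun _ => 1, 0, 1, one_pos, rfl, fun n h => absurd h (Nat.not_lt_zero n)⟩
    with hq0
  set st : ℕ → AccSt := fun k => F^[k] q0 with hst
  have hstep : ∀ k, AccStep g (st k) (st (k + 1)) := by
    intro k
    have h : st (k + 1) = F (st k) := Function.iterate_succ_apply' F k q0
    rw [h]; exact hF _
  have hmlt : ∀ k, (st k).m < (st (k + 1)).m := fun k => (hstep k).1
  have hmono : StrictMono fun k => (st k).m := strictMono_nat_of_lt_succ hmlt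
  have hmge : ∀ k, k ≤ (st k).m := by
    intro k
    induction k with
    | zero => exact Nat.zero_le _
    | succ k ih => exact Nat.succ_le_of_lt (lt_of_le_of_lt ih (hmlt k))
  have agree : ∀ k k', k ≤ k' → ∀ n ≤ (st k).m, (st k').p n = (st k).p n := by
    intro k k' hk
    induction k', hk using Nat.le_induction with
    | base => intro n _; rfl
    | succ k' hk ih =>
      intro n hn
      rw [(hstep k').2.1 n (le_trans hn (hmono.monotone hk)), ih n hn]
  set s : ℕ → ℝ := fun n => (st (n + 1)).p n with hs
  have s_eq : ∀ k n, n ≤ (st k).m → s n = (st k).p n := by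
    intro k n hn
    rcases le_total k (n + 1) with h | h
    · exact agree k (n + 1) h n hn
    · exact (agree (n + 1) k h n (le_trans (Nat.le_succ n) (hmge (n + 1)))).symm
  have c_pos : ∀ k, 0 < (st k).c := fun k => (st k).hc
  have s_m : ∀ k, s ((st k).m) = (st k).c := by
    intro k; rw [s_eq k _ le_rfl, (st k).hpm]
  have s_pos : ∀ n, 0 < s n := by
    intro n
    have h1 : n < (st (n + 1)).m := lt_of_lt_of_le (Nat.lt_succ_self n) (hmge (n + 1))
    have h2 := (st (n + 1)).hdec n h1
    have h3 := c_pos (n + 1)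
    have h4 : s n = (st (n + 1)).p n := rfl
    linarith
  have block : ∀ n, ∃ k, (st k).m ≤ n ∧ n < (st (k + 1)).m := by
    intro n
    have hP0 : (st 0).m ≤ n := by
      have : st 0 = q0 := rfl
      rw [this]
      exact Nat.zero_le n
    refine ⟨Nat.findGreatest (fun k => (st k).m ≤ n) (n + 1),
      Nat.findGreatest_spec (P := fun k => (st k).m ≤ n) (m := 0) (Nat.zero_le _) hP0, ?_⟩
    set k := Nat.findGreatest (fun k => (st k).m ≤ n) (n + 1) with hkdef
    by_cases h : k + 1 ≤ n + 1
    · have h2 : ¬ ((st (k + 1)).m ≤ n) := by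
        have h5 : Nat.findGreatest (fun j => (st j).m ≤ n) (n + 1) < k + 1 := by omega
        exact Nat.findGreatest_is_greatest (P := fun j => (st j).m ≤ n) (n := n + 1) (k := k + 1) h5 h
      omega
    · have h3 : n + 1 ≤ k + 1 := by omega
      have h4 := hmge (k + 1)
      omega
  have sdec : ∀ n, s (n + 1) ≤ s n ∧ s n - s (n + 1) ≤ s n / (n + 2) := by
    intro n
    obtain ⟨k, hk1, hk2⟩ := block n
    have h1 := (hstep k).2.2.2.1 n hk1 hk2
    rwa [← s_eq (k + 1) n (le_of_lt hk2), ← s_eq (k + 1) (n + 1) hk2] at h1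
  have santi : Antitone s := antitone_nat_of_succ_le fun n => (sdec n).1
  have cbound : ∀ k, (st k).c ≤ (3 / 4 : ℝ) ^ k := by
    intro k
    induction k with
    | zero =>
      have : (st 0).c = 1 := rfl
      rw [this, pow_zero]
    | succ k ih =>
      have h1 := (hstep k).2.2.1
      have h2 : (3 : ℝ) / 4 * (st k).c ≤ 3 / 4 * (3 / 4) ^ k :=
        mul_le_mul_of_nonneg_left ih (by norm_num)
      have h3 : ((3 : ℝ) / 4) ^ (k + 1) = 3 / 4 * (3 / 4) ^ k := by ring
      rw [h3]
      linarith
  have stendsto : Tendsto s atTop (nhds 0) := by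
    rw [Metric.tendsto_atTop]
    intro ε hε
    obtain ⟨k, hk⟩ := exists_pow_lt_of_lt_one hε (by norm_num : (3 : ℝ) / 4 < 1)
    refine ⟨(st k).m, fun n hn => ?_⟩
    rw [Real.dist_eq, sub_zero, abs_of_pos (s_pos n)]
    calc s n ≤ s ((st k).m) := santi hn
    _ = (st k).c := s_m k
    _ ≤ (3 / 4) ^ k := cbound k
    _ < ε := hk
  have sne : ∀ n, s n ≠ 0 := fun n => (s_pos n).ne'
  have sratio : Tendsto (fun n : ℕ => (s (n + 1) - 0) / (s n - 0)) atTop (nhds 1) := by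
    simp only [sub_zero]
    have hlo : Tendsto (fun n : ℕ => 1 - 1 / ((n : ℝ) + 2)) atTop (nhds 1) := by
      simpa using tendsto_const_nhds.sub aux_div2
    refine tendsto_of_tendsto_of_tendsto_of_le_of_le hlo tendsto_const_nhds ?_ ?_
    · intro n
      have h := (sdec n).2
      have hp := s_pos n
      show 1 - 1 / ((n : ℝ) + 2) ≤ s (n + 1) / s n
      rw [le_div_iff₀ hp]
      have e : (1 - 1 / ((n : ℝ) + 2)) * s n = s n - s n / ((n : ℝ) + 2) := by ring
      rw [e]
      linarith
    · intro n
      exact (div_le_one (s_pos n)).mpr (sdec n).1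
  obtain ⟨Hg1, Hg2⟩ := hg s 0 ⟨stendsto, sne, sratio⟩
  have hφ : Tendsto (fun k => (st (k + 1)).m) atTop atTop :=
    hmono.tendsto_atTop.comp (tendsto_add_atTop_nat 1)
  have H3 := Hg2.comp hφ
  have hev := H3.eventually_lt_const (by norm_num : (0 : ℝ) < 1 / 2)
  obtain ⟨k, hk⟩ := hev.exists
  simp only [Function.comp] at hk
  have harg : (fun i : Fin ((st (k + 1)).m + 1) => s i.1) = fun i => (st (k + 1)).p i.1 := by
    funext i
    exact s_eq (k + 1) i.1 (Nat.lt_succ_iff.mp i.2)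
  have hb := (hstep k).2.2.2.2
  have hcpos := c_pos (k + 1)
  rw [sub_zero, sub_zero, harg, s_m (k + 1), div_lt_iff₀ hcpos] at hk
  linarith
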